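/- The vector NLS Yang–Baxter map on pairs of N-vectors defined by ⟨u₁| = ⟨y₁| + (b−a)/(1+⟨x₁,y₂⟩) ⟨x₁|, ⟨u₂| = ⟨y₂|, ⟨v₁| = ⟨x₁|, ⟨v₂| = ⟨x₂| + (a−b)/(1+⟨x₁,y₂⟩) ⟨y₂| admits the Lax representation M(u₁,u₂;a,λ)M(v₁,v₂;b,λ) = M(y₁,y₂;b,λ)M(x₁,x₂;a,λ) for all λ, where M(w₁,w₂;a,λ) is the (N+1)×(N+1) matrix with (1,1) entry λ + a + ⟨w₁,w₂⟩, first row (after the corner) ⟨w₁|, first column (after the corner) |w₂⟩, and identity in the remaining N×N block; assume 1 + ⟨x₁,y₂⟩ ≠ 0. -/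

import Mathlib

open Matrix

/-- Standard dot product of two `N`-vectors. -/
def dotP {K : Type*} [Field K] {N : ℕ} (v w : Fin N → K) : K :=
  ∑ i, v i * w i

/-- The vector NLS Lax matrix: corner entry `λ + a + dotP w₁ w₂`, first row `⟨w₁|`,
first column `|w₂⟩`, identity in the remaining `N × N` block. -/
def vlaxM {K : Type*} [Field K] {N : ℕ} (w1 w2 : Fin N → K) (a lam : K) :
    Matrix (Fin 1 ⊕ Fin N) (Fin 1 ⊕ Fin N) K :=
  Matrix.fromBlocks !![lam + a + dotP w1 w2]
    (Matrix.of fun _ j => w1 j) (Matrix.of fun i _ => w2 i) 1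

private lemma sum_cmul {K : Type*} [Field K] {N : ℕ} (c : K) (f g : Fin N → K) :
    ∑ x, c * f x * g x = c * ∑ x, f x * g x := by
  rw [Finset.mul_sum]; exact Finset.sum_congr rfl fun x _ => by ring

private lemma sum_mulc {K : Type*} [Field K] {N : ℕ} (c : K) (f g : Fin N → K) :
    ∑ x, f x * (c * g x) = c * ∑ x, f x * g x := by
  rw [Finset.mul_sum]; exact Finset.sum_congr rfl fun x _ => by ring

set_option maxHeartbeats 800000 in
/-- The vector NLS Yang–Baxter map admits the Lax representation
`M(u₁,u₂;a,λ) M(v₁,v₂;b,λ) = M(y₁,y₂;b,λ) M(x₁,x₂;a,λ)`. -/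
theorem vector_NLS_lax_representation {K : Type*} [Field K] [CharZero K] {N : ℕ}
    (a b : K) (x1 x2 y1 y2 : Fin N → K)
    (h : 1 + dotP x1 y2 ≠ 0)
    (u1 u2 v1 v2 : Fin N → K)
    (hu1 : u1 = fun i => y1 i + (b - a) / (1 + dotP x1 y2) * x1 i)
    (hu2 : u2 = y2)
    (hv1 : v1 = x1)
    (hv2 : v2 = fun i => x2 i + (a - b) / (1 + dotP x1 y2) * y2 i) :
    ∀ lam : K, vlaxM u1 u2 a lam * vlaxM v1 v2 b lam =
      vlaxM y1 y2 b lam * vlaxM x1 x2 a lam := by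
  subst hu1 hu2 hv1 hv2
  simp only [dotP] at h
  intro lam
  ext (i | i) (j | j) <;>
    simp only [vlaxM, Matrix.mul_apply, Fintype.sum_sum_type, Matrix.fromBlocks_apply₁₁,
      Matrix.fromBlocks_apply₁₂, Matrix.fromBlocks_apply₂₁, Matrix.fromBlocks_apply₂₂,
      Matrix.of_apply, Matrix.cons_val', Matrix.cons_val_zero, Matrix.empty_val',
      Matrix.cons_val_fin_one, Matrix.one_apply, dotP, Finset.univ_unique,
      Finset.sum_singleton, add_mul, mul_add, Finset.sum_add_distrib,
      sum_cmul, sum_mulc, mul_ite, mul_one, mul_zero, ite_mul, zero_mul, one_mul,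
      Finset.sum_ite_eq, Finset.sum_ite_eq', Finset.mem_univ, if_true]
  case inl.inl =>
    generalize hT : ∑ x : Fin N, v1 x * u2 x = T at h ⊢
    generalize ∑ x : Fin N, y1 x * u2 x = Y
    generalize ∑ x : Fin N, v1 x * x2 x = X
    generalize ∑ x : Fin N, y1 x * x2 x = P
    have hd : (a - b) / (1 + T) = -((b - a) / (1 + T)) := by ring
    rw [hd]
    have hc : (b - a) / (1 + T) * (1 + T) = b - a := div_mul_cancel₀ _ h
    generalize hcg : (b - a) / (1 + T) = c at hc ⊢
    linear_combination (X - Y - c * T) * hc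
  case inl.inr =>
    generalize hT : ∑ x : Fin N, v1 x * u2 x = T at h ⊢
    generalize ∑ x : Fin N, y1 x * u2 x = Y
    have hc : (b - a) / (1 + T) * (1 + T) = b - a := div_mul_cancel₀ _ h
    generalize hcg : (b - a) / (1 + T) = c at hc ⊢
    linear_combination v1 j * hc
  case inr.inl =>
    generalize hT : ∑ x : Fin N, v1 x * u2 x = T at h ⊢
    generalize ∑ x : Fin N, v1 x * x2 x = X
    have hd : (a - b) / (1 + T) = -((b - a) / (1 + T)) := by ring
    rw [hd]
    have hc : (b - a) / (1 + T) * (1 + T) = b - a := div_mul_cancel₀ _ h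
    generalize hcg : (b - a) / (1 + T) = c at hc ⊢
    linear_combination (-(u2 i)) * hc
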